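/- Let (Z, 𝒵, ω) be a probability space and (κ_t)_{t≥0} a Markov semigroup on Z leaving ω invariant. Let f : Z → ℝ be bounded measurable and suppose g : Z → ℝ is a measurable function such that for ω-almost every z, (1/T)∫₀ᵀ (G_t f)(z) dt → g(z) as T → +∞. Then g is ω-a.e. equal to the conditional expectation E_ω(f | σ(𝓘)), where σ(𝓘) is the σ-algebra generated by the invariant sets of the semigroup. -/

import Mathlib

open MeasureTheory ProbabilityTheory Filter Topology

/-- A Markov semigroup on a probability space `(Z, ω)`: a family of Markov kernels indexed
by `t ≥ 0` satisfying the Chapman–Kolmogorov semigroup law, joint measurability of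
`(t, z) ↦ κ_t(z, A)`, and invariance of `ω`. -/
structure IsMarkovSemigroup {Z : Type*} [MeasurableSpace Z] (ω : Measure Z)
    (κ : ℝ → ProbabilityTheory.Kernel Z Z) : Prop where
  markov : ∀ t : ℝ, 0 ≤ t → IsMarkovKernel (κ t)
  semigroup : ∀ s t : ℝ, 0 ≤ s → 0 ≤ t → κ (s + t) = (κ s).comp (κ t)
  jointMeasurable : ∀ A : Set Z, MeasurableSet A →
    Measurable (fun p : ℝ × Z => κ p.1 p.2 A)
  invariant : ∀ t : ℝ, 0 ≤ t → ∀ A : Set Z, MeasurableSet A →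
    ∫⁻ z, κ t z A ∂ω = ω A

/-- A measurable set `A` is invariant for the semigroup if `κ_t(z, A) = 1_A(z)` for
ω-a.e. `z`, for every `t ≥ 0`. -/
def IsInvariantSet {Z : Type*} [MeasurableSpace Z] (ω : Measure Z)
    (κ : ℝ → ProbabilityTheory.Kernel Z Z) (A : Set Z) : Prop :=
  MeasurableSet A ∧ ∀ t : ℝ, 0 ≤ t →
    (fun z => κ t z A) =ᵐ[ω] A.indicator (fun _ => (1 : ENNReal))

section MSTEHelpers

variable {Z : Type*} [MeasurableSpace Z]

/-- Integrability of a bounded (everywhere) a.e.-strongly measurable function. -/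
lemma mste_integrable_of_bound {α : Type*} [MeasurableSpace α] {μ : Measure α} [IsFiniteMeasure μ] {h : α → ℝ}
    (hm : AEStronglyMeasurable h μ) {C : ℝ} (hb : ∀ z, |h z| ≤ C) : Integrable h μ :=
  ⟨hm, HasFiniteIntegral.of_bounded (C := C) (Filter.Eventually.of_forall fun z => by
    simpa [Real.norm_eq_abs] using hb z)⟩

lemma mste_abs_integral_le {α : Type*} [MeasurableSpace α] {μ : Measure α} [IsProbabilityMeasure μ] {h : α → ℝ} {C : ℝ}
    (hb : ∀ z, |h z| ≤ C) : |∫ z, h z ∂μ| ≤ C := by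
  have := norm_integral_le_of_norm_le_const (μ := μ) (f := h) (C := C)
    (Filter.Eventually.of_forall fun z => by simpa [Real.norm_eq_abs] using hb z)
  simpa [Real.norm_eq_abs, measure_univ] using this

/-- Bochner integral against a bind of a probability measure with a Markov kernel,
for bounded measurable integrands. -/
lemma mste_integral_bind {ν : Measure Z} [IsProbabilityMeasure ν] (η : Kernel Z Z)
    [IsMarkovKernel η] {h : Z → ℝ} (hh : Measurable h) {C : ℝ} (hC : ∀ z, |h z| ≤ C) :
    ∫ w, h w ∂(ν.bind η) = ∫ y, ∫ w, h w ∂(η y) ∂ν := by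
  -- first the nonneg case
  have key : ∀ (h : Z → ℝ), Measurable h → (∀ z, 0 ≤ h z) → (∀ z, h z ≤ C + C) →
      ∫ w, h w ∂(ν.bind η) = ∫ y, ∫ w, h w ∂(η y) ∂ν := by
    intro h hh h0 hCb
    have hof : Measurable fun w => ENNReal.ofReal (h w) := hh.ennreal_ofReal
    have hφ : Measurable fun y => ∫⁻ w, ENNReal.ofReal (h w) ∂(η y) :=
      Measurable.lintegral_kernel hof
    have hφlt : ∀ y, (∫⁻ w, ENNReal.ofReal (h w) ∂(η y)) < ⊤ := by
      intro y
      calc (∫⁻ w, ENNReal.ofReal (h w) ∂(η y)) ≤ ∫⁻ _, ENNReal.ofReal (C + C) ∂(η y) :=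
          lintegral_mono fun w => ENNReal.ofReal_le_ofReal (hCb w)
        _ = ENNReal.ofReal (C + C) := by simp
        _ < ⊤ := ENNReal.ofReal_lt_top
    rw [integral_eq_lintegral_of_nonneg_ae (Filter.Eventually.of_forall h0)
      hh.aestronglyMeasurable, Measure.lintegral_bind η.measurable.aemeasurable hof.aemeasurable]
    have hinner : ∀ y, ∫ w, h w ∂(η y)
        = (∫⁻ w, ENNReal.ofReal (h w) ∂(η y)).toReal := fun y =>
      integral_eq_lintegral_of_nonneg_ae (Filter.Eventually.of_forall h0)
        hh.aestronglyMeasurable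
    simp_rw [hinner]
    rw [integral_toReal (hφ.aemeasurable) (Filter.Eventually.of_forall hφlt)]
  -- general case via shifting by C
  haveI : IsProbabilityMeasure (ν.bind η) :=
    ⟨by rw [Measure.bind_apply MeasurableSet.univ η.measurable.aemeasurable]; simp⟩
  have hGm : StronglyMeasurable fun y => ∫ w, h w ∂(η y) :=
    StronglyMeasurable.integral_kernel_prod_right (κ := η) (f := fun _ w => h w)
      (hh.stronglyMeasurable.comp_measurable measurable_snd)
  have hGb : ∀ y, |∫ w, h w ∂(η y)| ≤ C := fun y => mste_abs_integral_le hC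
  have h1 := key (fun z => h z + C) (hh.add_const C)
    (fun z => by have := (abs_le.mp (hC z)).1; linarith)
    (fun z => by have := (abs_le.mp (hC z)).2; linarith)
  have e1 : ∫ w, (h w + C) ∂(ν.bind η) = (∫ w, h w ∂(ν.bind η)) + C := by
    rw [integral_add (mste_integrable_of_bound hh.aestronglyMeasurable hC) (integrable_const C),
      integral_const]
    simp
  have e2 : ∀ y, ∫ w, (h w + C) ∂(η y) = (∫ w, h w ∂(η y)) + C := by
    intro y
    rw [integral_add (mste_integrable_of_bound hh.aestronglyMeasurable hC) (integrable_const C),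
      integral_const]
    simp
  simp_rw [e1, e2] at h1
  rw [integral_add (mste_integrable_of_bound hGm.aestronglyMeasurable hGb)
    (integrable_const C), integral_const] at h1
  have : ν.real Set.univ = 1 := by simp
  rw [this, smul_eq_mul, one_mul] at h1
  linarith


lemma mste_meas_kernel_integral {α β : Type*} [MeasurableSpace α] [MeasurableSpace β] (K : Kernel α β) [IsSFiniteKernel K] {h : β → ℝ}
    (hh : Measurable h) : StronglyMeasurable fun a => ∫ w, h w ∂(K a) :=
  StronglyMeasurable.integral_kernel_prod_right (κ := K) (f := fun _ w => h w)
    (hh.stronglyMeasurable.comp_measurable measurable_snd)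

variable {ω : Measure Z} {κ : ℝ → Kernel Z Z}

lemma mste_bind_eq (hκ : IsMarkovSemigroup ω κ) {t : ℝ} (ht : 0 ≤ t) : ω.bind (κ t) = ω :=
  Measure.ext fun A hA => by rw [Measure.bind_apply hA (κ t).measurable.aemeasurable, hκ.invariant t ht A hA]

lemma mste_int_inv [IsProbabilityMeasure ω] (hκ : IsMarkovSemigroup ω κ) {t : ℝ} (ht : 0 ≤ t)
    {h : Z → ℝ} (hh : Measurable h) {C : ℝ} (hC : ∀ z, |h z| ≤ C) :
    ∫ z, ∫ y, h y ∂(κ t z) ∂ω = ∫ y, h y ∂ω := by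
  haveI := hκ.markov t ht
  rw [← mste_integral_bind (κ t) hh hC, mste_bind_eq hκ ht]

lemma mste_G_comp (hκ : IsMarkovSemigroup ω κ) {s t : ℝ} (hs : 0 ≤ s) (ht : 0 ≤ t)
    {h : Z → ℝ} (hh : Measurable h) {C : ℝ} (hC : ∀ z, |h z| ≤ C) (z : Z) :
    ∫ y, (∫ w, h w ∂(κ s y)) ∂(κ t z) = ∫ w, h w ∂(κ (s + t) z) := by
  haveI := hκ.markov s hs
  haveI := hκ.markov t ht
  rw [hκ.semigroup s t hs ht, Kernel.comp_apply, mste_integral_bind (κ s) hh hC]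

lemma mste_ae_kernel (hκ : IsMarkovSemigroup ω κ) {t : ℝ} (ht : 0 ≤ t) {p : Z → Prop}
    (hp : ∀ᵐ z ∂ω, p z) : ∀ᵐ z ∂ω, ∀ᵐ y ∂(κ t z), p y := by
  haveI := hκ.markov t ht
  set N := toMeasurable ω {z | ¬ p z} with hNdef
  have hNm : MeasurableSet N := measurableSet_toMeasurable ω _
  have hN0 : ω N = 0 := by rw [hNdef, measure_toMeasurable]; exact ae_iff.mp hp
  have hmz : Measurable fun z => κ t z N :=
    (hκ.jointMeasurable N hNm).comp (measurable_const.prodMk measurable_id)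
  have hint0 : ∫⁻ z, κ t z N ∂ω = 0 := by rw [hκ.invariant t ht N hNm, hN0]
  have h0 : ∀ᵐ z ∂ω, κ t z N = 0 := by
    have := (lintegral_eq_zero_iff hmz).mp hint0
    filter_upwards [this] with z hz using hz
  filter_upwards [h0] with z hz
  rw [ae_iff]
  exact measure_mono_null (Set.Subset.trans (fun y hy => hy) (subset_toMeasurable ω _)) hz

noncomputable def mste_K {Z : Type*} [MeasurableSpace Z] {ω : Measure Z} {κ : ℝ → Kernel Z Z}
    (hκ : IsMarkovSemigroup ω κ) : Kernel (ℝ × Z) Z where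
  toFun := fun p => κ (max p.1 0) p.2
  measurable' := Measure.measurable_of_measurable_coe _ fun A hA =>
    (hκ.jointMeasurable A hA).comp ((measurable_fst.max measurable_const).prodMk measurable_snd)

lemma mste_K_apply (hκ : IsMarkovSemigroup ω κ) (p : ℝ × Z) :
    mste_K hκ p = κ (max p.1 0) p.2 := rfl

lemma mste_K_markov (hκ : IsMarkovSemigroup ω κ) : IsMarkovKernel (mste_K hκ) :=
  ⟨fun p => (hκ.markov _ (le_max_right _ _)).isProbabilityMeasure p.2⟩

/-- Joint strong measurability of `(t,z) ↦ ∫ f ∂κ (max t 0) z`. -/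
lemma mste_measF (hκ : IsMarkovSemigroup ω κ) {f : Z → ℝ} (hf : Measurable f) :
    StronglyMeasurable fun p : ℝ × Z => ∫ y, f y ∂(κ (max p.1 0) p.2) := by
  haveI := mste_K_markov hκ
  exact mste_meas_kernel_integral (mste_K hκ) hf

/-- Fubini for bounded jointly measurable functions on `Ioc 0 T × Z`. -/
lemma mste_fubini {ν : Measure Z} [IsFiniteMeasure ν] {F : ℝ × Z → ℝ}
    (hF : StronglyMeasurable F) {C : ℝ} (hC : ∀ p, |F p| ≤ C) (T : ℝ) :
    ∫ z, (∫ t in Set.Ioc 0 T, F (t, z)) ∂ν = ∫ t in Set.Ioc 0 T, (∫ z, F (t, z) ∂ν) := by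
  haveI : IsFiniteMeasure (volume.restrict (Set.Ioc 0 T)) :=
    ⟨by rw [Measure.restrict_apply_univ]; exact measure_Ioc_lt_top⟩
  refine (MeasureTheory.integral_integral_swap (μ := volume.restrict (Set.Ioc 0 T)) (ν := ν)
      (f := fun t z => F (t, z)) ?_).symm
  exact mste_integrable_of_bound hF.aestronglyMeasurable (fun p => hC p)

lemma mste_pi (hκ : IsMarkovSemigroup ω κ) : IsPiSystem {A : Set Z | IsInvariantSet ω κ A} := by
  intro A hA B hB _
  refine ⟨hA.1.inter hB.1, fun t ht => ?_⟩
  haveI := hκ.markov t ht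
  filter_upwards [hA.2 t ht, hB.2 t ht] with z hzA hzB
  by_cases hz : z ∈ A ∩ B
  · rw [Set.indicator_of_mem hz]
    have h1 : κ t z A = 1 := by rw [hzA, Set.indicator_of_mem hz.1]
    have h2 : κ t z B = 1 := by rw [hzB, Set.indicator_of_mem hz.2]
    rw [← prob_compl_eq_zero_iff (hA.1.inter hB.1)]
    have : κ t z (Aᶜ ∪ Bᶜ) ≤ κ t z Aᶜ + κ t z Bᶜ := measure_union_le _ _
    rw [(prob_compl_eq_zero_iff hA.1).mpr h1, (prob_compl_eq_zero_iff hB.1).mpr h2] at this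
    have h3 : (A ∩ B)ᶜ = Aᶜ ∪ Bᶜ := Set.compl_inter A B
    rw [h3]
    simpa using this
  · rw [Set.indicator_of_notMem hz]
    by_cases hzA' : z ∈ A
    · have hzB' : z ∉ B := fun h => hz ⟨hzA', h⟩
      have h2 : κ t z B = 0 := by rw [hzB, Set.indicator_of_notMem hzB']
      exact measure_mono_null Set.inter_subset_right h2
    · have h1 : κ t z A = 0 := by rw [hzA, Set.indicator_of_notMem hzA']
      exact measure_mono_null Set.inter_subset_left h1

lemma mste_univ_inv (hκ : IsMarkovSemigroup ω κ) : IsInvariantSet ω κ Set.univ := by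
  refine ⟨MeasurableSet.univ, fun t ht => ?_⟩
  haveI := hκ.markov t ht
  filter_upwards with z
  simp

end MSTEHelpers

/-- If the time averages `(1/T) ∫₀ᵀ (G_t f)(z) dt` of a bounded measurable `f` converge
a.e. to a limit function `g`, then `g` is a.e. equal to the conditional expectation of `f`
with respect to the σ-algebra generated by the invariant sets of the semigroup. -/
theorem markov_semigroup_time_average_eq_condexp
    {Z : Type*} [mZ : MeasurableSpace Z] (ω : Measure Z) [IsProbabilityMeasure ω]
    (κ : ℝ → ProbabilityTheory.Kernel Z Z) (hκ : IsMarkovSemigroup ω κ)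
    (f : Z → ℝ) (hf : Measurable f) (hfb : ∃ C : ℝ, ∀ z, |f z| ≤ C)
    (g : Z → ℝ) (hg : Measurable g)
    (hlim : ∀ᵐ z ∂ω, Tendsto (fun T : ℝ => (1 / T) * ∫ t in (0:ℝ)..T, (∫ y, f y ∂(κ t z)))
        atTop (nhds (g z))) :
    g =ᵐ[ω] ω[f | MeasurableSpace.generateFrom {A : Set Z | IsInvariantSet ω κ A}] := by
  classical
  obtain ⟨C₀, hC₀⟩ := hfb
  set C : ℝ := max C₀ 0 with hCdef
  have hC : ∀ z, |f z| ≤ C := fun z => (hC₀ z).trans (le_max_left _ _)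
  have hC0 : (0:ℝ) ≤ C := le_max_right _ _
  have hm : MeasurableSpace.generateFrom {A : Set Z | IsInvariantSet ω κ A} ≤ mZ :=
    MeasurableSpace.generateFrom_le fun A hA => hA.1
  set F : ℝ × Z → ℝ := fun p => ∫ y, f y ∂(κ (max p.1 0) p.2) with hFdef
  have hFm : StronglyMeasurable F := mste_measF hκ hf
  have hFb : ∀ p, |F p| ≤ C := fun p => by
    haveI := hκ.markov (max p.1 0) (le_max_right _ _)
    exact mste_abs_integral_le hC
  have hFeq : ∀ t : ℝ, 0 ≤ t → ∀ z, F (t, z) = ∫ y, f y ∂(κ t z) := fun t ht z => by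
    simp only [hFdef, max_eq_left ht]
  set avg : ℝ → Z → ℝ := fun T z => (1 / T) * ∫ t in Set.Ioc (0:ℝ) T, F (t, z) with havgdef
  have havg_int : ∀ T : ℝ, 0 ≤ T → ∀ z, avg T z = (1 / T) * ∫ t in (0:ℝ)..T, F (t, z) :=
    fun T hT z => by rw [havgdef]; rw [intervalIntegral.integral_of_le hT]
  have hlim' : ∀ᵐ z ∂ω, Tendsto (fun T => avg T z) atTop (𝓝 (g z)) := by
    filter_upwards [hlim] with z hz
    refine hz.congr' ?_
    filter_upwards [eventually_ge_atTop (0:ℝ)] with T hT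
    rw [havg_int T hT z]
    congr 1
    refine intervalIntegral.integral_congr fun t htt => ?_
    rw [Set.uIcc_of_le hT] at htt
    exact (hFeq t htt.1 z).symm
  have havg_meas : ∀ T : ℝ, Measurable fun z => avg T z := by
    intro T
    exact (hFm.integral_prod_left'.measurable).const_mul _
  have havg_b : ∀ T : ℝ, 0 < T → ∀ z, |avg T z| ≤ C := by
    intro T hT z
    have hb : ‖∫ t in Set.Ioc (0:ℝ) T, F (t, z)‖ ≤ C * (volume (Set.Ioc (0:ℝ) T)).toReal := by
      refine norm_setIntegral_le_of_norm_le_const measure_Ioc_lt_top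
        (fun t _ => by simpa [Real.norm_eq_abs] using hFb (t, z))
    rw [Real.volume_Ioc, ENNReal.toReal_ofReal (by linarith)] at hb
    rw [havgdef]
    rw [abs_mul, abs_of_pos (by positivity : (0:ℝ) < 1 / T)]
    rw [Real.norm_eq_abs] at hb
    calc 1 / T * |∫ t in Set.Ioc (0:ℝ) T, F (t, z)| ≤ 1 / T * (C * (T - 0)) := by
          apply mul_le_mul_of_nonneg_left hb (by positivity)
      _ = C := by field_simp; ring
  -- a.e. bound on g
  have hgC : ∀ᵐ z ∂ω, |g z| ≤ C := by
    filter_upwards [hlim'] with z hz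
    have h1 : g z ≤ C := le_of_tendsto hz (by
      filter_upwards [eventually_gt_atTop (0:ℝ)] with T hT
      exact (abs_le.mp (havg_b T hT z)).2)
    have h2 : -C ≤ g z := ge_of_tendsto hz (by
      filter_upwards [eventually_gt_atTop (0:ℝ)] with T hT
      exact (abs_le.mp (havg_b T hT z)).1)
    exact abs_le.mpr ⟨h2, h1⟩
  set g' : Z → ℝ := fun z => max (-C) (min C (g z)) with hg'def
  have hg'm : Measurable g' := Measurable.max measurable_const (Measurable.min measurable_const hg)
  have hg'b : ∀ z, |g' z| ≤ C := fun z =>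
    abs_le.mpr ⟨le_max_left _ _, max_le (neg_le_self hC0) (min_le_left _ _)⟩
  have hgg' : g' =ᵐ[ω] g := by
    filter_upwards [hgC] with z hz
    rw [hg'def]
    dsimp only
    rw [min_eq_right (abs_le.mp hz).2, max_eq_right (abs_le.mp hz).1]
  have hconv' : ∀ᵐ z ∂ω, Tendsto (fun T => avg T z) atTop (𝓝 (g' z)) := by
    filter_upwards [hlim', hgg'] with z h1 h2
    rw [h2]
    exact h1
  have hfint : Integrable f ω := mste_integrable_of_bound hf.aestronglyMeasurable hC
  have hg'int : Integrable g' ω := mste_integrable_of_bound hg'm.aestronglyMeasurable hg'b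
  have hgint : Integrable g ω := hg'int.congr hgg'
  -- the limit function is invariant under the semigroup
  have hGfix : ∀ t : ℝ, 0 ≤ t → (fun z => ∫ y, g' y ∂(κ t z)) =ᵐ[ω] g' := by
    intro t ht
    haveI := hκ.markov t ht
    have hker : ∀ᵐ z ∂ω, ∀ᵐ y ∂(κ t z), Tendsto (fun T => avg T y) atTop (𝓝 (g' y)) :=
      mste_ae_kernel hκ ht hconv'
    filter_upwards [hker, hconv'] with z hz hz2
    have hFzm : Measurable fun u : ℝ => F (u, z) :=
      hFm.measurable.comp (measurable_id.prodMk measurable_const)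
    have hii : ∀ a b : ℝ, IntervalIntegrable (fun u => F (u, z)) volume a b := by
      have h : ∀ c d : ℝ, IntegrableOn (fun u => F (u, z)) (Set.Ioc c d) volume := by
        intro c d
        haveI : IsFiniteMeasure (volume.restrict (Set.Ioc c d)) :=
          ⟨by rw [Measure.restrict_apply_univ]; exact measure_Ioc_lt_top⟩
        exact mste_integrable_of_bound hFzm.aestronglyMeasurable (fun u => hFb (u, z))
      exact fun a b => ⟨h a b, h b a⟩
    -- (1) dominated convergence
    have h1 : Tendsto (fun T => ∫ y, avg T y ∂(κ t z)) atTop (𝓝 (∫ y, g' y ∂(κ t z))) := by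
      refine tendsto_integral_filter_of_dominated_convergence (fun _ => C) ?_ ?_
        (integrable_const C) hz
      · filter_upwards [eventually_ge_atTop (0:ℝ)] with T _
        exact (havg_meas T).aestronglyMeasurable
      · filter_upwards [eventually_gt_atTop (0:ℝ)] with T hT
        exact Filter.Eventually.of_forall fun y => by
          simpa [Real.norm_eq_abs] using havg_b T hT y
    -- (2) identification of the integrals for T > 0
    have h2 : ∀ T : ℝ, 0 < T →
        ∫ y, avg T y ∂(κ t z) = (1 / T) * ∫ u in t..(T + t), F (u, z) := by
      intro T hT
      have e1 : ∫ y, avg T y ∂(κ t z)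
          = (1 / T) * ∫ y, (∫ s in Set.Ioc (0:ℝ) T, F (s, y)) ∂(κ t z) := by
        simp only [havgdef]
        rw [integral_const_mul]
      rw [e1, mste_fubini hFm hFb T]
      congr 1
      have e2 : ∫ s in Set.Ioc (0:ℝ) T, (∫ y, F (s, y) ∂(κ t z))
          = ∫ s in Set.Ioc (0:ℝ) T, F (s + t, z) := by
        refine setIntegral_congr_fun measurableSet_Ioc fun s hs => ?_
        have hs0 : (0:ℝ) ≤ s := le_of_lt hs.1
        have hy : ∀ y, F (s, y) = ∫ w, f w ∂(κ s y) := fun y => hFeq s hs0 y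
        simp_rw [hy]
        rw [mste_G_comp hκ hs0 ht hf hC z, ← hFeq (s + t) (by linarith) z]
      rw [e2, ← intervalIntegral.integral_of_le (le_of_lt hT),
        intervalIntegral.integral_comp_add_right (a := (0:ℝ)) (b := T) (fun u => F (u, z)) t,
        zero_add]
    -- (3) the right-hand side converges to g' z
    have hφ : Tendsto (fun S : ℝ => (1 / S) * ∫ u in (0:ℝ)..S, F (u, z)) atTop (𝓝 (g' z)) := by
      refine hz2.congr' ?_
      filter_upwards [eventually_ge_atTop (0:ℝ)] with T hT
      exact havg_int T hT z
    have hφt : Tendsto (fun T : ℝ => (1 / (T + t)) * ∫ u in (0:ℝ)..(T + t), F (u, z))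
        atTop (𝓝 (g' z)) := hφ.comp (tendsto_atTop_add_const_right atTop t tendsto_id)
    have hratio : Tendsto (fun T : ℝ => (T + t) / T) atTop (𝓝 1) := by
      have : Tendsto (fun T : ℝ => 1 + t * T⁻¹) atTop (𝓝 (1 + t * 0)) :=
        tendsto_const_nhds.add (tendsto_const_nhds.mul tendsto_inv_atTop_zero)
      rw [mul_zero, add_zero] at this
      refine this.congr' ?_
      filter_upwards [eventually_gt_atTop (0:ℝ)] with T hT
      field_simp
    have hsmall : Tendsto (fun T : ℝ => (1 / T) * ∫ u in (0:ℝ)..t, F (u, z)) atTop (𝓝 0) := by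
      have : Tendsto (fun T : ℝ => T⁻¹ * ∫ u in (0:ℝ)..t, F (u, z)) atTop
          (𝓝 (0 * ∫ u in (0:ℝ)..t, F (u, z))) := tendsto_inv_atTop_zero.mul_const _
      rw [zero_mul] at this
      simpa [one_div] using this
    have h3 : Tendsto (fun T : ℝ => (1 / T) * ∫ u in t..(T + t), F (u, z)) atTop (𝓝 (g' z)) := by
      have hcomb : Tendsto (fun T : ℝ => ((T + t) / T) *
          ((1 / (T + t)) * ∫ u in (0:ℝ)..(T + t), F (u, z))
          - (1 / T) * ∫ u in (0:ℝ)..t, F (u, z)) atTop (𝓝 (1 * g' z - 0)) :=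
        (hratio.mul hφt).sub hsmall
      rw [one_mul, sub_zero] at hcomb
      refine hcomb.congr' ?_
      filter_upwards [eventually_gt_atTop (0:ℝ)] with T hT
      have hTt : (0:ℝ) < T + t := by linarith
      have key : ∫ u in t..(T + t), F (u, z)
          = (∫ u in (0:ℝ)..(T + t), F (u, z)) - ∫ u in (0:ℝ)..t, F (u, z) :=
        (intervalIntegral.integral_interval_sub_left (hii 0 (T + t)) (hii 0 t)).symm
      rw [key, mul_sub]
      congr 1
      rw [← mul_assoc]
      congr 1
      field_simp
    have h4 : (fun T => ∫ y, avg T y ∂(κ t z)) =ᶠ[atTop]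
        fun T => (1 / T) * ∫ u in t..(T + t), F (u, z) := by
      filter_upwards [eventually_gt_atTop (0:ℝ)] with T hT using h2 T hT
    exact tendsto_nhds_unique (h1.congr' h4) h3
  -- concentration: the kernel a.s. preserves the value of g'
  have hsqb : ∀ y, |(g' y) ^ 2| ≤ C ^ 2 := fun y => by
    rw [abs_pow]
    exact pow_le_pow_left₀ (abs_nonneg _) (hg'b y) 2
  have hsqm : Measurable fun y => (g' y) ^ 2 := hg'm.pow_const 2
  have hconc : ∀ t : ℝ, 0 ≤ t → ∀ᵐ z ∂ω, (κ t z) {y | g' y ≠ g' z} = 0 := by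
    intro t ht
    haveI := hκ.markov t ht
    set V : Z → ℝ := fun z => ∫ y, (g' y - g' z) ^ 2 ∂(κ t z) with hVdef
    have hVm : StronglyMeasurable V := by
      refine StronglyMeasurable.integral_kernel_prod_right (κ := κ t)
        (f := fun z y => (g' y - g' z) ^ 2) ?_
      exact (((hg'm.comp measurable_snd).sub (hg'm.comp measurable_fst)).pow_const
        2).stronglyMeasurable
    have hdiffb : ∀ z y, |(g' y - g' z) ^ 2| ≤ (2 * C) ^ 2 := by
      intro z y
      rw [abs_pow]
      refine pow_le_pow_left₀ (abs_nonneg _) ?_ 2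
      calc |g' y - g' z| ≤ |g' y| + |g' z| := abs_sub _ _
        _ ≤ 2 * C := by linarith [hg'b y, hg'b z]
    have hVb : ∀ z, |V z| ≤ (2 * C) ^ 2 := fun z => mste_abs_integral_le (hdiffb z)
    have hVint : Integrable V ω := mste_integrable_of_bound hVm.aestronglyMeasurable hVb
    have hVint_inner : ∀ z, Integrable (fun y => (g' y - g' z) ^ 2) (κ t z) := fun z =>
      mste_integrable_of_bound ((hg'm.sub_const (g' z)).pow_const 2).aestronglyMeasurable
        (hdiffb z)
    -- ∫ V dω = 0
    have hVexp : ∀ z, V z = (∫ y, (g' y) ^ 2 ∂(κ t z))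
        - 2 * g' z * (∫ y, g' y ∂(κ t z)) + (g' z) ^ 2 := by
      intro z
      have h1 : Integrable (fun y => (g' y) ^ 2) (κ t z) :=
        mste_integrable_of_bound hsqm.aestronglyMeasurable hsqb
      have h2 : Integrable (fun y => 2 * g' z * g' y) (κ t z) :=
        (mste_integrable_of_bound hg'm.aestronglyMeasurable hg'b).const_mul _
      have e : V z = ∫ y, ((g' y) ^ 2 - 2 * g' z * g' y + (g' z) ^ 2) ∂(κ t z) := by
        rw [hVdef]
        dsimp only
        congr 1
        funext y
        ring
      have h12 : Integrable (fun y => (g' y) ^ 2 - 2 * g' z * g' y) (κ t z) := h1.sub h2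
      rw [e, integral_add h12 (integrable_const _), integral_sub h1 h2,
        integral_const_mul, integral_const]
      simp
    have hVzero : ∫ z, V z ∂ω = 0 := by
      have hGm : StronglyMeasurable fun z => ∫ y, g' y ∂(κ t z) :=
        mste_meas_kernel_integral (κ t) hg'm
      have hGb : ∀ z, |∫ y, g' y ∂(κ t z)| ≤ C := fun z => mste_abs_integral_le hg'b
      have hA : Integrable (fun z => ∫ y, (g' y) ^ 2 ∂(κ t z)) ω :=
        mste_integrable_of_bound (mste_meas_kernel_integral (κ t) hsqm).aestronglyMeasurable
          (fun z => mste_abs_integral_le hsqb)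
      have hB : Integrable (fun z => 2 * g' z * (∫ y, g' y ∂(κ t z))) ω := by
        refine mste_integrable_of_bound
          (((hg'm.const_mul 2).mul hGm.measurable).aestronglyMeasurable) (C := 2 * C * C) ?_
        intro z
        rw [abs_mul, abs_mul]
        have h1 : |(2:ℝ)| * |g' z| ≤ 2 * C := by
          rw [abs_two]
          linarith [hg'b z]
        exact mul_le_mul h1 (hGb z) (abs_nonneg _) (by linarith)
      have hD : Integrable (fun z => (g' z) ^ 2) ω :=
        mste_integrable_of_bound hsqm.aestronglyMeasurable hsqb
      have e : ∫ z, V z ∂ω = (∫ z, (∫ y, (g' y) ^ 2 ∂(κ t z)) ∂ω)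
          - (∫ z, 2 * g' z * (∫ y, g' y ∂(κ t z)) ∂ω) + ∫ z, (g' z) ^ 2 ∂ω := by
        have hAB : Integrable (fun z => (∫ y, (g' y) ^ 2 ∂(κ t z))
            - 2 * g' z * (∫ y, g' y ∂(κ t z))) ω := hA.sub hB
        simp_rw [hVexp]
        rw [integral_add hAB hD, integral_sub hA hB]
      have eA : ∫ z, (∫ y, (g' y) ^ 2 ∂(κ t z)) ∂ω = ∫ z, (g' z) ^ 2 ∂ω :=
        mste_int_inv hκ ht hsqm hsqb
      have eB : ∫ z, 2 * g' z * (∫ y, g' y ∂(κ t z)) ∂ω = ∫ z, 2 * (g' z) ^ 2 ∂ω := by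
        refine integral_congr_ae ?_
        filter_upwards [hGfix t ht] with z hz
        rw [hz]
        ring
      rw [e, eA, eB, integral_const_mul]
      ring
    have hVae : V =ᵐ[ω] 0 := by
      refine (integral_eq_zero_iff_of_nonneg ?_ hVint).mp hVzero
      intro z
      exact integral_nonneg fun y => sq_nonneg _
    filter_upwards [hVae] with z hz
    simp only [Pi.zero_apply] at hz
    have h0 : (fun y => (g' y - g' z) ^ 2) =ᵐ[κ t z] 0 :=
      (integral_eq_zero_iff_of_nonneg (fun y => sq_nonneg _) (hVint_inner z)).mp hz
    have h0' : ∀ᵐ y ∂(κ t z), (g' y - g' z) ^ 2 = 0 := by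
      filter_upwards [h0] with y hy using hy
    rw [ae_iff] at h0'
    refine measure_mono_null ?_ h0'
    intro y hy
    simp only [Set.mem_setOf_eq] at hy ⊢
    intro hcon
    exact hy (sub_eq_zero.mp ((pow_eq_zero_iff two_ne_zero).mp hcon))
  -- super-level sets of g' are invariant
  have hinv : ∀ c : ℝ, IsInvariantSet ω κ {z | c < g' z} := by
    intro c
    refine ⟨measurableSet_lt measurable_const hg'm, fun t ht => ?_⟩
    haveI := hκ.markov t ht
    filter_upwards [hconc t ht] with z hz
    by_cases hzc : c < g' z
    · rw [Set.indicator_of_mem (show z ∈ {z | c < g' z} from hzc)]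
      rw [← prob_compl_eq_zero_iff (measurableSet_lt measurable_const hg'm)]
      refine measure_mono_null ?_ hz
      intro y hy
      simp only [Set.mem_compl_iff, Set.mem_setOf_eq, not_lt] at hy
      simp only [Set.mem_setOf_eq]
      intro he
      rw [he] at hy
      exact absurd hzc (not_lt.mpr hy)
    · rw [Set.indicator_of_notMem (show z ∉ {z | c < g' z} from hzc)]
      refine measure_mono_null ?_ hz
      intro y hy
      simp only [Set.mem_setOf_eq] at hy ⊢
      intro he
      rw [he] at hy
      exact hzc hy
  -- g' is measurable w.r.t. the invariant σ-algebra
  have hg'M : Measurable[MeasurableSpace.generateFrom {A : Set Z | IsInvariantSet ω κ A}] g' :=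
    measurable_of_Ioi fun c => MeasurableSpace.measurableSet_generateFrom (hinv c)
  -- set integrals over invariant sets
  have hSetEqInv : ∀ A : Set Z, IsInvariantSet ω κ A →
      ∫ z in A, g z ∂ω = ∫ z in A, f z ∂ω := by
    intro A hA
    have hAm : MeasurableSet A := hA.1
    set fA : Z → ℝ := A.indicator f with hfAdef
    have hfAm : Measurable fA := hf.indicator hAm
    have hfAb : ∀ z, |fA z| ≤ C := by
      intro z
      rw [hfAdef]
      by_cases hz : z ∈ A
      · rw [Set.indicator_of_mem hz]; exact hC z
      · rw [Set.indicator_of_notMem hz]; simpa using hC0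
    have hstep : ∀ t : ℝ, 0 ≤ t → ∫ z in A, F (t, z) ∂ω = ∫ z in A, f z ∂ω := by
      intro t ht
      haveI := hκ.markov t ht
      have hkey : (fun z => A.indicator (fun z' => F (t, z')) z)
          =ᵐ[ω] fun z => ∫ y, fA y ∂(κ t z) := by
        filter_upwards [hA.2 t ht] with z hz
        by_cases hzA : z ∈ A
        · rw [Set.indicator_of_mem hzA, hFeq t ht z]
          refine integral_congr_ae ?_
          have h1 : (κ t z) A = 1 := by rw [hz, Set.indicator_of_mem hzA]
          have h0 : (κ t z) Aᶜ = 0 := (prob_compl_eq_zero_iff hAm).mpr h1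
          have hsub : {y | f y ≠ fA y} ⊆ Aᶜ := by
            intro y hy
            by_contra hyA
            rw [Set.notMem_compl_iff] at hyA
            exact hy (by rw [hfAdef, Set.indicator_of_mem hyA])
          rw [Filter.EventuallyEq, ae_iff]
          exact measure_mono_null hsub h0
        · rw [Set.indicator_of_notMem hzA]
          have h0 : (κ t z) A = 0 := by rw [hz, Set.indicator_of_notMem hzA]
          have hae : fA =ᵐ[κ t z] (fun _ => (0:ℝ)) := by
            rw [Filter.EventuallyEq, ae_iff]
            refine measure_mono_null ?_ h0
            intro y hy
            by_contra hyA
            exact hy (by rw [hfAdef, Set.indicator_of_notMem hyA])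
          rw [integral_congr_ae hae, integral_const]
          simp
      calc ∫ z in A, F (t, z) ∂ω
          = ∫ z, A.indicator (fun z' => F (t, z')) z ∂ω := (integral_indicator hAm).symm
        _ = ∫ z, (∫ y, fA y ∂(κ t z)) ∂ω := integral_congr_ae hkey
        _ = ∫ y, fA y ∂ω := mste_int_inv hκ ht hfAm hfAb
        _ = ∫ z in A, f z ∂ω := integral_indicator hAm
    have hDCT : Tendsto (fun T => ∫ z in A, avg T z ∂ω) atTop (𝓝 (∫ z in A, g z ∂ω)) := by
      refine tendsto_integral_filter_of_dominated_convergence (fun _ => C) ?_ ?_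
        (integrable_const C) (ae_restrict_of_ae hlim')
      · filter_upwards [eventually_ge_atTop (0:ℝ)] with T _
        exact ((havg_meas T).aestronglyMeasurable).restrict
      · filter_upwards [eventually_gt_atTop (0:ℝ)] with T hT
        exact Filter.Eventually.of_forall fun y => by
          simpa [Real.norm_eq_abs] using havg_b T hT y
    have hconst : (fun T => ∫ z in A, avg T z ∂ω) =ᶠ[atTop] fun _ => ∫ z in A, f z ∂ω := by
      filter_upwards [eventually_gt_atTop (0:ℝ)] with T hT
      have e1 : ∫ z in A, avg T z ∂ω
          = (1 / T) * ∫ z in A, (∫ s in Set.Ioc (0:ℝ) T, F (s, z)) ∂ω := by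
        simp only [havgdef]
        rw [integral_const_mul]
      rw [e1, mste_fubini hFm hFb T]
      have e2 : ∫ s in Set.Ioc (0:ℝ) T, (∫ z in A, F (s, z) ∂ω)
          = ∫ s in Set.Ioc (0:ℝ) T, (∫ z in A, f z ∂ω) :=
        setIntegral_congr_fun measurableSet_Ioc fun s hs => hstep s (le_of_lt hs.1)
      rw [e2, setIntegral_const, measureReal_def, Real.volume_Ioc, smul_eq_mul,
        ENNReal.toReal_ofReal (by linarith : (0:ℝ) ≤ T - 0)]
      rw [sub_zero, ← mul_assoc]
      field_simp
    exact tendsto_nhds_unique (hDCT.congr' hconst) tendsto_const_nhds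
  -- extend to the generated σ-algebra
  have hSetEq : ∀ s : Set Z,
      MeasurableSet[MeasurableSpace.generateFrom {A : Set Z | IsInvariantSet ω κ A}] s →
      ∫ z in s, g z ∂ω = ∫ z in s, f z ∂ω := by
    have huniv : ∫ z, g z ∂ω = ∫ z, f z ∂ω := by
      have := hSetEqInv Set.univ (mste_univ_inv hκ)
      simpa [Measure.restrict_univ] using this
    refine MeasurableSpace.induction_on_inter
      (m := MeasurableSpace.generateFrom {A : Set Z | IsInvariantSet ω κ A})
      (C := fun s _ => ∫ z in s, g z ∂ω = ∫ z in s, f z ∂ω) rfl (mste_pi hκ) (by simp)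
      (fun A hA => hSetEqInv A hA) ?_ ?_
    · intro A hAgen hA
      have hAZ : MeasurableSet A := hm _ hAgen
      have h1 := integral_add_compl hAZ hgint
      have h2 := integral_add_compl hAZ hfint
      linarith
    · intro s hdisj hsgen hseq
      have hsZ : ∀ i, MeasurableSet (s i) := fun i => hm _ (hsgen i)
      rw [integral_iUnion hsZ hdisj hgint.integrableOn,
        integral_iUnion hsZ hdisj hfint.integrableOn]
      exact tsum_congr hseq
  -- conclude via the characterisation of the conditional expectation
  haveI : SigmaFinite (ω.trim hm) := IsFiniteMeasure.toSigmaFinite _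
  refine ae_eq_condExp_of_forall_setIntegral_eq hm hfint
    (fun s _ _ => hgint.integrableOn) (fun s hs _ => hSetEq s hs) ?_
  exact ⟨g', hg'M.stronglyMeasurable, hgg'.symm⟩
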